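/- arXiv:2505.02065 — 2 statements merged into one kernel-verified Lean document; each statement's English description precedes it below -/
import Mathlib

section
/- Let H and K be real Hilbert spaces and let ι : H → K be a compact continuous linear map. Let X ⊆ H be a closed linear subspace such that the set M = {u ∈ X : ‖ι u‖_K = 1} is nonempty. Then there exists u* ∈ M such that ‖u*‖_H = inf{‖u‖_H : u ∈ M}, and moreover ⟨u*, φ⟩_H = ‖u*‖_H² · ⟨ι u*, ι φ⟩_K for every φ ∈ X. -/
open MeasureTheory

open Filter Topology

/-- constrained minimization (Claim A.1(a), abstract form): if
`ι : H → K` is a compact continuous linear map between real Hilbert spaces and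
`X ⊆ H` is a closed subspace such that `M = {u ∈ X : ‖ι u‖ = 1}` is nonempty, then
the `H`-norm attains its minimum on `M` at some `u*`, and `u*` is a weak
eigenfunction: `⟪u*, φ⟫_H = ‖u*‖² ⟪ι u*, ι φ⟫_K` for all `φ ∈ X`. -/
theorem stmt_10 {H K : Type*}
    [NormedAddCommGroup H] [InnerProductSpace ℝ H] [CompleteSpace H]
    [NormedAddCommGroup K] [InnerProductSpace ℝ K] [CompleteSpace K]
    (ι : H →L[ℝ] K) (hcompact : IsCompactOperator ι)
    (X : Submodule ℝ H) (hX : IsClosed (X : Set H))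
    (hM : ∃ u ∈ X, ‖ι u‖ = 1) :
    ∃ ustar : H, ustar ∈ X ∧ ‖ι ustar‖ = 1 ∧
      (∀ u ∈ X, ‖ι u‖ = 1 → ‖ustar‖ ≤ ‖u‖) ∧
      ∀ φ ∈ X, (inner ℝ ustar φ : ℝ) = ‖ustar‖ ^ 2 * (inner ℝ (ι ustar) (ι φ) : ℝ) := by
  classical
  -- the infimum
  set S : Set ℝ := (fun u => ‖u‖) '' {u : H | u ∈ X ∧ ‖ι u‖ = 1} with hSdef
  obtain ⟨u₀, hu₀X, hu₀⟩ := hM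
  have hSne : S.Nonempty := ⟨‖u₀‖, u₀, ⟨hu₀X, hu₀⟩, rfl⟩
  have hSbdd : BddBelow S := ⟨0, fun s ⟨u, _, hs⟩ => hs ▸ norm_nonneg u⟩
  set m : ℝ := sInf S with hmdef
  have hm_le : ∀ u ∈ X, ‖ι u‖ = 1 → m ≤ ‖u‖ := fun u hu h1 =>
    csInf_le hSbdd ⟨u, ⟨hu, h1⟩, rfl⟩
  have hm0 : 0 ≤ m := le_csInf hSne fun s ⟨u, _, hs⟩ => hs ▸ norm_nonneg u
  -- key inequality: m * ‖ι v‖ ≤ ‖v‖ for v ∈ X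
  have hkey : ∀ v ∈ X, m * ‖ι v‖ ≤ ‖v‖ := by
    intro v hv
    rcases eq_or_ne (ι v) 0 with h0 | h0
    · simp [h0, norm_nonneg]
    · have hc : (0:ℝ) < ‖ι v‖ := norm_pos_iff.2 h0
      have hmem : (‖ι v‖⁻¹ • v) ∈ X := X.smul_mem _ hv
      have hn : ‖ι (‖ι v‖⁻¹ • v)‖ = 1 := by
        rw [_root_.map_smul, norm_smul, norm_inv, Real.norm_eq_abs, abs_of_pos hc,
          inv_mul_cancel₀ hc.ne']
      have := hm_le _ hmem hn
      rw [norm_smul, norm_inv, Real.norm_eq_abs, abs_of_pos hc] at this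
      calc m * ‖ι v‖ ≤ (‖ι v‖⁻¹ * ‖v‖) * ‖ι v‖ := by nlinarith
        _ = ‖v‖ := by field_simp
  -- minimizing sequence
  have hseq : ∀ n : ℕ, ∃ u : H, u ∈ X ∧ ‖ι u‖ = 1 ∧ ‖u‖ < m + 1 / (n + 1) := by
    intro n
    have hpos : (0:ℝ) < 1 / (n + 1) := by positivity
    obtain ⟨s, hsS, hs⟩ := csInf_lt_iff hSbdd hSne |>.1 (by linarith : m < m + 1/(n+1))
    obtain ⟨u, ⟨huX, hu1⟩, rfl⟩ := hsS
    exact ⟨u, huX, hu1, hs⟩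
  choose v hvX hv1 hvlt using hseq
  clear hmdef hSdef hSne hSbdd
  clear_value m
  clear hu₀ hu₀X
  clear_value S
  have hvtendsto : Tendsto (fun n => ‖v n‖) atTop (𝓝 m) := by
    have h1 : Tendsto (fun n : ℕ => m + 1 / (n + 1 : ℝ)) atTop (𝓝 m) := by
      have := tendsto_one_div_add_atTop_nhds_zero_nat (𝕜 := ℝ)
      simpa using (tendsto_const_nhds (x := m)).add this
    refine tendsto_of_tendsto_of_tendsto_of_le_of_le tendsto_const_nhds h1 ?_ ?_
    · intro n; exact hm_le _ (hvX n) (hv1 n)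
    · intro n; exact (hvlt n).le
  -- boundedness and compactness: extract subsequence with ι (v n) convergent
  have hbdd : Bornology.IsBounded (Set.range v) := by
    refine isBounded_iff_forall_norm_le.2 ⟨m + 1, ?_⟩
    rintro x ⟨n, rfl⟩
    have : (1:ℝ) / (n + 1) ≤ 1 := by
      rw [div_le_one (by positivity)]; linarith [Nat.cast_nonneg (α := ℝ) n]
    linarith [hvlt n]
  obtain ⟨C, hCcomp, hCsub⟩ :=
    hcompact.image_subset_compact_of_bounded (σ₁₂ := RingHom.id ℝ) hbdd
  obtain ⟨w, hwC, ψ, hψmono, hψtend⟩ :=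
    hCcomp.tendsto_subseq (x := fun n => ι (v n)) (fun n => hCsub ⟨v n, ⟨n, rfl⟩, rfl⟩)
  set u : ℕ → H := v ∘ ψ with hudef
  have huX : ∀ n, u n ∈ X := fun n => hvX (ψ n)
  have hu1 : ∀ n, ‖ι (u n)‖ = 1 := fun n => hv1 (ψ n)
  have hutendsto : Tendsto (fun n => ‖u n‖) atTop (𝓝 m) :=
    hvtendsto.comp hψmono.tendsto_atTop
  have hιu : Tendsto (fun n => ι (u n)) atTop (𝓝 w) := hψtend
  have hwnorm : ‖w‖ = 1 := by
    have h1 : Tendsto (fun n => ‖ι (u n)‖) atTop (𝓝 ‖w‖) :=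
      (continuous_norm.tendsto w).comp hιu
    have h2 : Tendsto (fun n => ‖ι (u n)‖) atTop (𝓝 1) := by
      simpa [hu1] using tendsto_const_nhds (x := (1:ℝ))
    exact tendsto_nhds_unique h1 h2
  -- the sequence is Cauchy (parallelogram law + minimality)
  have hsq : Tendsto (fun p : ℕ × ℕ => ‖u p.1 - u p.2‖ ^ 2) (atTop ×ˢ atTop) (𝓝 0) := by
    have hbound : ∀ p : ℕ × ℕ, ‖u p.1 - u p.2‖ ^ 2 ≤
        2 * ‖u p.1‖ ^ 2 + 2 * ‖u p.2‖ ^ 2 - m ^ 2 * ‖ι (u p.1) + ι (u p.2)‖ ^ 2 := by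
      rintro ⟨n, k⟩
      have hpar := parallelogram_law_with_norm ℝ (u n) (u k)
      have hk := hkey (u n + u k) (X.add_mem (huX n) (huX k))
      rw [map_add] at hk
      have h2 : m ^ 2 * ‖ι (u n) + ι (u k)‖ ^ 2 ≤ ‖u n + u k‖ ^ 2 := by
        have := mul_self_le_mul_self (mul_nonneg hm0 (norm_nonneg _)) hk
        nlinarith [this]
      nlinarith [h2]
    have hg : Tendsto (fun p : ℕ × ℕ =>
        2 * ‖u p.1‖ ^ 2 + 2 * ‖u p.2‖ ^ 2 - m ^ 2 * ‖ι (u p.1) + ι (u p.2)‖ ^ 2)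
        (atTop ×ˢ atTop) (𝓝 0) := by
      have h1 : Tendsto (fun p : ℕ × ℕ => ‖u p.1‖) (atTop ×ˢ atTop) (𝓝 m) :=
        hutendsto.comp tendsto_fst
      have h2 : Tendsto (fun p : ℕ × ℕ => ‖u p.2‖) (atTop ×ˢ atTop) (𝓝 m) :=
        hutendsto.comp tendsto_snd
      have h3 : Tendsto (fun p : ℕ × ℕ => ‖ι (u p.1) + ι (u p.2)‖) (atTop ×ˢ atTop)
          (𝓝 ‖w + w‖) :=
        (continuous_norm.tendsto _).comp ((hιu.comp tendsto_fst).add (hιu.comp tendsto_snd))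
      have hww : ‖w + w‖ = 2 := by
        have : w + w = (2:ℝ) • w := by module
        rw [this, norm_smul, hwnorm]; norm_num
      rw [hww] at h3
      have := ((((h1.mul h1).const_mul 2).add ((h2.mul h2).const_mul 2)).sub
        ((h3.mul h3).const_mul (m ^ 2)))
      have heq : 2 * (m * m) + 2 * (m * m) - m ^ 2 * (2 * 2) = 0 := by ring
      rw [heq] at this
      convert this using 2 with p
      ring
    exact tendsto_of_tendsto_of_tendsto_of_le_of_le tendsto_const_nhds hg
      (fun p => sq_nonneg _) hbound
  have hcauchy : CauchySeq u := by
    rw [cauchySeq_iff_tendsto_dist_atTop_0]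
    have h := (Real.continuous_sqrt.tendsto 0).comp hsq
    rw [Real.sqrt_zero, prod_atTop_atTop_eq] at h
    refine h.congr fun p => ?_
    simp [Real.sqrt_sq (norm_nonneg _), dist_eq_norm]
  obtain ⟨ustar, hlim⟩ := cauchySeq_tendsto_of_complete hcauchy
  have hustX : ustar ∈ X := hX.mem_of_tendsto hlim (Eventually.of_forall huX)
  have hιlim : Tendsto (fun n => ι (u n)) atTop (𝓝 (ι ustar)) :=
    (ι.continuous.tendsto ustar).comp hlim
  have hιust1 : ‖ι ustar‖ = 1 := by
    have h1 : Tendsto (fun n => ‖ι (u n)‖) atTop (𝓝 ‖ι ustar‖) :=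
      (continuous_norm.tendsto _).comp hιlim
    have h2 : Tendsto (fun n => ‖ι (u n)‖) atTop (𝓝 1) := by
      simpa [hu1] using tendsto_const_nhds (x := (1:ℝ))
    exact tendsto_nhds_unique h1 h2
  have hust : ‖ustar‖ = m := by
    have h1 : Tendsto (fun n => ‖u n‖) atTop (𝓝 ‖ustar‖) :=
      (continuous_norm.tendsto _).comp hlim
    exact tendsto_nhds_unique h1 hutendsto
  refine ⟨ustar, hustX, hιust1, ?_, ?_⟩
  · intro uu huu h1; rw [hust]; exact hm_le uu huu h1
  -- Euler–Lagrange equation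
  intro φ hφ
  set A : ℝ := inner ℝ ustar φ - m ^ 2 * inner ℝ (ι ustar) (ι φ) with hA
  set B : ℝ := ‖φ‖ ^ 2 - m ^ 2 * ‖ι φ‖ ^ 2 with hB
  have hquad : ∀ t : ℝ, 0 ≤ 2 * t * A + t ^ 2 * B := by
    intro t
    have hk := hkey (ustar + t • φ) (X.add_mem hustX (X.smul_mem t hφ))
    have hsq : m ^ 2 * ‖ι (ustar + t • φ)‖ ^ 2 ≤ ‖ustar + t • φ‖ ^ 2 := by
      have := mul_self_le_mul_self (mul_nonneg hm0 (norm_nonneg _)) hk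
      nlinarith [this]
    have he1 : ‖ustar + t • φ‖ ^ 2
        = ‖ustar‖ ^ 2 + 2 * (t * inner ℝ ustar φ) + t ^ 2 * ‖φ‖ ^ 2 := by
      rw [norm_add_sq_real, real_inner_smul_right, norm_smul, Real.norm_eq_abs,
        mul_pow, sq_abs]
    have he2 : ‖ι (ustar + t • φ)‖ ^ 2
        = ‖ι ustar‖ ^ 2 + 2 * (t * inner ℝ (ι ustar) (ι φ)) + t ^ 2 * ‖ι φ‖ ^ 2 := by
      rw [map_add, _root_.map_smul, norm_add_sq_real, real_inner_smul_right, norm_smul,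
        Real.norm_eq_abs, mul_pow, sq_abs]
    rw [he1, he2, hιust1] at hsq
    have hm2 : ‖ustar‖ ^ 2 = m ^ 2 := by rw [hust]
    rw [hm2] at hsq
    simp only [hA, hB]
    nlinarith [hsq]
  have hA0 : A = 0 := by
    by_contra hA0
    set ε : ℝ := 1 / (|B| + 1) with hεdef
    have hε : (0:ℝ) < ε := by positivity
    have h := hquad (-ε * A)
    have hA2 : 0 < A ^ 2 := by positivity
    have heq : 2 * (-ε * A) * A + (-ε * A) ^ 2 * B = (ε * A ^ 2) * (ε * B - 2) := by ring
    rw [heq] at h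
    have hpos : 0 < ε * A ^ 2 := mul_pos hε hA2
    have h2 : (0:ℝ) ≤ ε * B - 2 := by
      by_contra h2
      push_neg at h2
      nlinarith
    have h3 : ε * |B| < 1 := by
      rw [hεdef, div_mul_eq_mul_div, one_mul, div_lt_one (by positivity)]
      linarith [abs_nonneg B]
    have h4 : ε * B ≤ ε * |B| := mul_le_mul_of_nonneg_left (le_abs_self B) hε.le
    linarith
  rw [hust]
  rw [hA] at hA0
  linarith
end

section
/- Let H be a real Hilbert space with an orthonormal Hilbert basis (e_k)_{k∈ℕ}, let E be a real normed space, and let ι : H → E be a compact continuous linear map. For each k ∈ ℕ let Z_k denote the closed linear span of {e_j : j ≥ k} and set β_k = sup{‖ι u‖_E : u ∈ Z_k, ‖u‖_H = 1}. Then β_k → 0 as k → ∞. -/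
open Filter Submodule Topology
open scoped RealInnerProductSpace

/-- abstract form of Lemma 4.1: if `(e_k)` is an orthonormal Hilbert
basis of a real Hilbert space `H` and `ι : H → E` is a compact continuous linear
map, then `β_k = sup{‖ι u‖ : u ∈ Z_k, ‖u‖ = 1} → 0`, where `Z_k` is the closed
span of `{e_j : j ≥ k}`. -/
theorem stmt_13 {H E : Type*}
    [NormedAddCommGroup H] [InnerProductSpace ℝ H] [CompleteSpace H]
    [NormedAddCommGroup E] [NormedSpace ℝ E]
    (e : ℕ → H) (he : Orthonormal ℝ e)
    (hspan : (Submodule.span ℝ (Set.range e)).topologicalClosure = ⊤)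
    (ι : H →L[ℝ] E) (hcompact : IsCompactOperator ι) :
    Tendsto (fun k : ℕ =>
        sSup {r : ℝ | ∃ u : H,
          u ∈ (Submodule.span ℝ (e '' {j | k ≤ j})).topologicalClosure ∧
          ‖u‖ = 1 ∧ r = ‖ι u‖})
      atTop (nhds 0) := by
  set Z : ℕ → Submodule ℝ H :=
    fun k => (Submodule.span ℝ (e '' {j | k ≤ j})).topologicalClosure with hZdef
  -- Partial sums of the basis expansion converge.
  have hb : ∀ v : H,
      Tendsto (fun n => ∑ j ∈ Finset.range n, ⟪e j, v⟫ • e j) atTop (𝓝 v) := by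
    intro v
    let b : HilbertBasis ℕ ℝ H := HilbertBasis.mk he hspan.ge
    have hcoe : ⇑b = e := HilbertBasis.coe_mk he hspan.ge
    have h := (b.hasSum_repr v).tendsto_sum_nat
    simp only [b.repr_apply_apply] at h
    have hcoe' : ∀ i, (b : ℕ → H) i = e i := fun i => congrFun hcoe i
    simp only [hcoe'] at h
    exact h
  -- Weak convergence: unit vectors in `Z n` pair to zero against any fixed vector.
  have key : ∀ (u : ℕ → H), (∀ n, u n ∈ Z n) → (∀ n, ‖u n‖ = 1) →
      ∀ v : H, Tendsto (fun n => ⟪v, u n⟫) atTop (𝓝 0) := by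
    intro u hu hnorm v
    have horth : ∀ n j, j < n → ⟪e j, u n⟫ = 0 := by
      intro n j hj
      have h1 : Z n ≤ (ℝ ∙ e j)ᗮ := by
        apply topologicalClosure_minimal
        · rw [span_le]
          rintro x ⟨i, hi, rfl⟩
          rw [SetLike.mem_coe, mem_orthogonal_singleton_iff_inner_right]
          simp only [Set.mem_setOf_eq] at hi
          exact he.2 (show j ≠ i by omega)
        · exact Submodule.isClosed_orthogonal _
      exact mem_orthogonal_singleton_iff_inner_right.mp (h1 (hu n))
    have heq : ∀ n, ⟪v, u n⟫ = ⟪v - ∑ j ∈ Finset.range n, ⟪e j, v⟫ • e j, u n⟫ := by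
      intro n
      rw [inner_sub_left, sum_inner]
      have : ∀ j ∈ Finset.range n, ⟪⟪e j, v⟫ • e j, u n⟫ = (0 : ℝ) := by
        intro j hj
        rw [real_inner_smul_left, horth n j (Finset.mem_range.mp hj), mul_zero]
      rw [Finset.sum_congr rfl this, Finset.sum_const, smul_zero, sub_zero]
    have hnormto : Tendsto (fun n => ‖v - ∑ j ∈ Finset.range n, ⟪e j, v⟫ • e j‖)
        atTop (𝓝 0) := by
      have : Tendsto (fun n => v - ∑ j ∈ Finset.range n, ⟪e j, v⟫ • e j) atTop
          (𝓝 (v - v)) := tendsto_const_nhds.sub (hb v)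
      rw [sub_self] at this
      simpa using this.norm
    have hle : ∀ n, |⟪v, u n⟫| ≤ ‖v - ∑ j ∈ Finset.range n, ⟪e j, v⟫ • e j‖ := by
      intro n
      rw [heq n]
      calc |⟪v - ∑ j ∈ Finset.range n, ⟪e j, v⟫ • e j, u n⟫|
          ≤ ‖v - ∑ j ∈ Finset.range n, ⟪e j, v⟫ • e j‖ * ‖u n‖ :=
            abs_real_inner_le_norm _ _
        _ = ‖v - ∑ j ∈ Finset.range n, ⟪e j, v⟫ • e j‖ := by rw [hnorm n, mul_one]
    have habs : Tendsto (fun n => |⟪v, u n⟫|) atTop (𝓝 0) :=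
      squeeze_zero (fun n => abs_nonneg _) hle hnormto
    simpa using tendsto_zero_iff_abs_tendsto_zero _ |>.mpr habs
  -- Main step: eventually all unit vectors of `Z k` have small image.
  have main : ∀ ε : ℝ, 0 < ε →
      ∀ᶠ k in atTop, ∀ u : H, u ∈ Z k → ‖u‖ = 1 → ‖ι u‖ ≤ ε := by
    intro ε hε
    by_contra hcon
    rw [not_eventually] at hcon
    have hsel : ∀ n : ℕ, ∃ u : H, u ∈ Z n ∧ ‖u‖ = 1 ∧ ε < ‖ι u‖ := by
      intro n
      obtain ⟨k, hk, hknot⟩ := frequently_atTop.mp hcon n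
      push_neg at hknot
      obtain ⟨u, hu, hn1, hn2⟩ := hknot
      refine ⟨u, ?_, hn1, hn2⟩
      have hZle : Z k ≤ Z n := by
        apply topologicalClosure_mono
        apply span_mono
        exact Set.image_mono fun j hj => le_trans hk hj
      exact hZle hu
    choose u hu h1 h2 using hsel
    have hK : IsCompact (closure (⇑ι '' Metric.closedBall 0 1)) :=
      hcompact.isCompact_closure_image_closedBall 1
    have hmem : ∀ n, ι (u n) ∈ closure (⇑ι '' Metric.closedBall 0 1) := by
      intro n
      apply subset_closure
      exact ⟨u n, by simp [Metric.mem_closedBall, dist_zero_right, h1 n], rfl⟩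
    obtain ⟨a, _, φ, hφ, hlim⟩ := hK.tendsto_subseq hmem
    have hεa : ε ≤ ‖a‖ :=
      ge_of_tendsto' hlim.norm fun n => (h2 (φ n)).le
    have ha0 : a = 0 := by
      apply NormedSpace.eq_zero_of_forall_dual_eq_zero ℝ
      intro f
      set v := (InnerProductSpace.toDual ℝ H).symm (f.comp ι) with hv
      have hfx : ∀ x : H, f (ι x) = ⟪v, x⟫ := by
        intro x
        have h := (InnerProductSpace.toDual ℝ H).apply_symm_apply (f.comp ι)
        calc f (ι x) = (f.comp ι) x := rfl
          _ = (InnerProductSpace.toDual ℝ H v) x := by rw [hv, h]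
          _ = ⟪v, x⟫ := InnerProductSpace.toDual_apply_apply
      have h1' : Tendsto (fun n => f (ι (u n))) atTop (𝓝 0) := by
        simp_rw [hfx]
        exact key u hu h1 v
      have h2' : Tendsto (fun n => f (ι (u (φ n)))) atTop (𝓝 (f a)) :=
        (f.continuous.tendsto a).comp hlim
      exact tendsto_nhds_unique h2' (h1'.comp hφ.tendsto_atTop)
    rw [ha0, norm_zero] at hεa
    linarith
  -- Conclude the convergence of the suprema.
  rw [Metric.tendsto_atTop]
  intro ε hε
  obtain ⟨N, hN⟩ := eventually_atTop.mp (main (ε / 2) (by positivity))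
  refine ⟨N, fun k hk => ?_⟩
  set S : Set ℝ := {r : ℝ | ∃ u : H, u ∈ Z k ∧ ‖u‖ = 1 ∧ r = ‖ι u‖} with hS
  have hbdd : BddAbove S := by
    refine ⟨‖ι‖, ?_⟩
    rintro r ⟨w, _, hn, rfl⟩
    calc ‖ι w‖ ≤ ‖ι‖ * ‖w‖ := ι.le_opNorm w
      _ = ‖ι‖ := by rw [hn, mul_one]
  have hmem : ‖ι (e k)‖ ∈ S := by
    refine ⟨e k, ?_, he.1 k, rfl⟩
    exact le_topologicalClosure _ (subset_span ⟨k, le_refl k, rfl⟩)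
  have h0 : (0 : ℝ) ≤ sSup S := le_trans (norm_nonneg _) (le_csSup hbdd hmem)
  have hle : sSup S ≤ ε / 2 := by
    apply Real.sSup_le _ (by positivity)
    rintro r ⟨w, hw, hn, rfl⟩
    exact hN k hk w hw hn
  rw [Real.dist_eq, sub_zero, abs_of_nonneg h0]
  linarith
end
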